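/- arXiv:2010.09478 — 4 statements merged into one kernel-verified Lean document; each statement's English description precedes it below -/
import Mathlib

section
/- Let P, Q be probability distributions on a finite set of size N with Q(x) > 0 for all x. Then KL(P||Q) ≤ (‖P - Q‖₁)² / min_x Q(x), where ‖P-Q‖₁ = Σ_x |P(x) - Q(x)| (inverse Pinsker inequality, weak form). -/
open Finset

/-- Inverse Pinsker inequality (weak form): for probability vectors `p, q` on a finite
nonempty set with `q` everywhere positive,
`KL(P‖Q) ≤ ‖P - Q‖₁² / min_x Q(x)`. -/
theorem inverse_pinsker_weak {S : Type*} [Fintype S] [Nonempty S]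
    (p q : S → ℝ) (hp0 : ∀ x, 0 ≤ p x) (hq0 : ∀ x, 0 < q x)
    (hp1 : ∑ x, p x = 1) (hq1 : ∑ x, q x = 1) :
    ∑ x, p x * Real.log (p x / q x) ≤
      (∑ x, |p x - q x|) ^ 2 / (Finset.univ.inf' Finset.univ_nonempty q) := by
  set m := Finset.univ.inf' Finset.univ_nonempty q with hm
  have hmle : ∀ x : S, m ≤ q x := fun x => Finset.inf'_le _ (Finset.mem_univ x)
  have hmpos : 0 < m := by
    obtain ⟨x, -, hx⟩ := Finset.exists_mem_eq_inf' (Finset.univ_nonempty (α := S)) q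
    rw [hm, hx]; exact hq0 x
  -- Step 1: KL ≤ chi-squared
  have step1 : ∑ x, p x * Real.log (p x / q x) ≤ ∑ x, (p x - q x) ^ 2 / q x := by
    have key : ∀ x : S, p x * Real.log (p x / q x) ≤ p x ^ 2 / q x - p x := by
      intro x
      rcases eq_or_lt_of_le (hp0 x) with h | h
      · simp [← h]
      · have hdiv : 0 < p x / q x := div_pos h (hq0 x)
        have := Real.log_le_sub_one_of_pos hdiv
        calc p x * Real.log (p x / q x) ≤ p x * (p x / q x - 1) := by
              exact mul_le_mul_of_nonneg_left this (le_of_lt h)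
          _ = p x ^ 2 / q x - p x := by
              have hq := (hq0 x).ne'
              field_simp
    calc ∑ x, p x * Real.log (p x / q x) ≤ ∑ x, (p x ^ 2 / q x - p x) :=
          Finset.sum_le_sum fun x _ => key x
      _ = ∑ x, (p x - q x) ^ 2 / q x := by
          rw [Finset.sum_sub_distrib, hp1]
          have : ∀ x : S, (p x - q x) ^ 2 / q x = p x ^ 2 / q x - 2 * p x + q x := by
            intro x
            have := (hq0 x).ne'
            field_simp; ring
          rw [Finset.sum_congr rfl fun x _ => this x]
          rw [Finset.sum_add_distrib, Finset.sum_sub_distrib, ← Finset.mul_sum, hp1, hq1]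
          ring
  -- Step 2: chi-squared ≤ (sum of squares)/m
  have step2 : ∑ x, (p x - q x) ^ 2 / q x ≤ (∑ x, (p x - q x) ^ 2) / m := by
    rw [Finset.sum_div]
    refine Finset.sum_le_sum fun x _ => ?_
    exact div_le_div_of_nonneg_left (sq_nonneg _) hmpos (hmle x)
  -- Step 3: sum of squares ≤ square of sum
  have step3 : ∑ x, (p x - q x) ^ 2 ≤ (∑ x, |p x - q x|) ^ 2 := by
    have h1 : ∀ x : S, (p x - q x) ^ 2 = |p x - q x| ^ 2 := fun x => (sq_abs _).symm
    rw [Finset.sum_congr rfl fun x _ => h1 x]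
    exact Finset.sum_sq_le_sq_sum_of_nonneg fun x _ => abs_nonneg _
  calc ∑ x, p x * Real.log (p x / q x) ≤ (∑ x, (p x - q x) ^ 2) / m := step1.trans step2
    _ ≤ (∑ x, |p x - q x|) ^ 2 / m := by
        gcongr
end

section
/- Let ε₁,...,ε_n be independent Rademacher random variables (P(ε_i = 1) = P(ε_i = -1) = 1/2), and let A ⊆ ℝⁿ be a finite set with ‖a‖₂ ≤ D for all a ∈ A. Then E[max_{a∈A} Σ_{i=1}^n ε_i a_i] ≤ D √(2 log |A|) (Massart's finite class lemma). -/
open MeasureTheory ProbabilityTheory Real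

section Aux

variable {Ω : Type*} [MeasurableSpace Ω] (μ : Measure Ω) [IsProbabilityMeasure μ]
  {X : Ω → ℝ}

lemma rad_ae (hX : Measurable X) (h1 : μ {ω | X ω = 1} = 1/2)
    (h2 : μ {ω | X ω = -1} = 1/2) : ∀ᵐ ω ∂μ, X ω = 1 ∨ X ω = -1 := by
  have hS1 : MeasurableSet {ω | X ω = 1} := hX (measurableSet_singleton 1)
  have hS2 : MeasurableSet {ω | X ω = -1} := hX (measurableSet_singleton (-1))
  have hdisj : Disjoint {ω | X ω = 1} {ω | X ω = -1} := by
    rw [Set.disjoint_left]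
    intro ω hω1 hω2
    simp only [Set.mem_setOf_eq] at hω1 hω2
    rw [hω1] at hω2; norm_num at hω2
  have hU : μ ({ω | X ω = 1} ∪ {ω | X ω = -1}) = 1 := by
    rw [measure_union hdisj hS2, h1, h2]
    rw [ENNReal.div_add_div_same, one_add_one_eq_two]
    exact ENNReal.div_self two_ne_zero ENNReal.ofNat_ne_top
  have hcomp : μ ({ω | X ω = 1} ∪ {ω | X ω = -1})ᶜ = 0 := by
    rw [measure_compl (hS1.union hS2) (measure_ne_top μ _), hU, measure_univ, tsub_self]
  rw [ae_iff]
  refine measure_mono_null ?_ hcomp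
  intro ω h
  simp only [Set.mem_setOf_eq, not_or] at h
  simp [Set.mem_compl_iff, Set.mem_union, h.1, h.2]

lemma rad_integral (hX : Measurable X) (h1 : μ {ω | X ω = 1} = 1/2)
    (h2 : μ {ω | X ω = -1} = 1/2) (g : ℝ → ℝ) :
    ∫ ω, g (X ω) ∂μ = (g 1 + g (-1)) / 2 := by
  have hS1 : MeasurableSet {ω | X ω = 1} := hX (measurableSet_singleton 1)
  have hS2 : MeasurableSet {ω | X ω = -1} := hX (measurableSet_singleton (-1))
  have hae := rad_ae μ hX h1 h2
  have heq : (fun ω => g (X ω)) =ᵐ[μ]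
      (fun ω => ({ω | X ω = 1}).indicator (fun _ => g 1) ω
        + ({ω | X ω = -1}).indicator (fun _ => g (-1)) ω) := by
    filter_upwards [hae] with ω h
    rcases h with h | h
    · have h2' : ω ∉ {ω | X ω = -1} := by
        simp only [Set.mem_setOf_eq, h]; norm_num
      rw [Set.indicator_of_mem (by exact h) , Set.indicator_of_notMem h2', h, add_zero]
    · have h1' : ω ∉ {ω | X ω = 1} := by
        simp only [Set.mem_setOf_eq, h]; norm_num
      rw [Set.indicator_of_notMem h1', Set.indicator_of_mem (by exact h), h, zero_add]
  rw [integral_congr_ae heq,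
    integral_add ((integrable_const _).indicator hS1) ((integrable_const _).indicator hS2),
    integral_indicator_const _ hS1, integral_indicator_const _ hS2, measureReal_def, measureReal_def, h1, h2]
  have : ((1 : ENNReal)/2).toReal = 1/2 := by
    rw [ENNReal.toReal_div]; norm_num
  rw [this, smul_eq_mul, smul_eq_mul]
  ring

lemma rad_integrable_exp (hX : Measurable X) (h1 : μ {ω | X ω = 1} = 1/2)
    (h2 : μ {ω | X ω = -1} = 1/2) (t : ℝ) :
    Integrable (fun ω => exp (t * X ω)) μ := by
  have hae := rad_ae μ hX h1 h2
  refine Integrable.mono' (integrable_const (exp |t|)) ((hX.const_mul t).exp).aestronglyMeasurable ?_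
  filter_upwards [hae] with ω h
  rw [Real.norm_eq_abs, Real.abs_exp]
  apply Real.exp_le_exp.2
  rcases h with h | h <;> rw [h] <;>
    [simpa using le_abs_self t; simpa using neg_le_abs t]

lemma rad_integrable (hX : Measurable X) (h1 : μ {ω | X ω = 1} = 1/2)
    (h2 : μ {ω | X ω = -1} = 1/2) : Integrable X μ := by
  have hae := rad_ae μ hX h1 h2
  refine Integrable.mono' (integrable_const 1) hX.aestronglyMeasurable ?_
  filter_upwards [hae] with ω h
  rcases h with h | h <;> rw [h] <;> norm_num

lemma rad_mgf (hX : Measurable X) (h1 : μ {ω | X ω = 1} = 1/2)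
    (h2 : μ {ω | X ω = -1} = 1/2) (t : ℝ) : mgf X μ t = Real.cosh t := by
  have := rad_integral μ hX h1 h2 (fun x => exp (t * x))
  simp only [mul_one, mul_neg_one] at this
  rw [mgf, this, Real.cosh_eq]

end Aux

/-- Massart's finite class lemma: if `ε₁, …, εₙ` are independent Rademacher signs and
`A ⊆ ℝⁿ` is a finite nonempty set with `‖a‖₂ ≤ D` for all `a ∈ A`, then
`E[max_{a ∈ A} ∑ i, εᵢ aᵢ] ≤ D √(2 log |A|)`. -/
theorem massart_finite_class {Ω : Type*} [MeasurableSpace Ω]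
    (μ : Measure Ω) [IsProbabilityMeasure μ]
    (n : ℕ) (ε : Fin n → Ω → ℝ) (hmeas : ∀ i, Measurable (ε i))
    (hindep : iIndepFun ε μ)
    (hrad : ∀ i, μ {ω | ε i ω = 1} = 1/2 ∧ μ {ω | ε i ω = -1} = 1/2)
    (A : Finset (Fin n → ℝ)) (hA : A.Nonempty) (D : ℝ)
    (hD : ∀ a ∈ A, Real.sqrt (∑ i, (a i) ^ 2) ≤ D) :
    ∫ ω, A.sup' hA (fun a => ∑ i, ε i ω * a i) ∂μ ≤
      D * Real.sqrt (2 * Real.log A.card) := by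
  classical
  set S : (Fin n → ℝ) → Ω → ℝ := fun a ω => ∑ i, ε i ω * a i with hS
  set M : Ω → ℝ := fun ω => A.sup' hA (fun a => S a ω) with hM
  set C : ℝ := (A.card : ℝ) with hC
  obtain ⟨a₀, ha₀⟩ := hA
  have hD0 : 0 ≤ D := (Real.sqrt_nonneg _).trans (hD a₀ ha₀)
  have hSmeas : ∀ a, Measurable (S a) :=
    fun a => Finset.measurable_sum _ (fun i _ => (hmeas i).mul_const _)
  have hSint : ∀ a, Integrable (S a) μ :=
    fun a => integrable_finset_sum _ (fun i _ =>
      (rad_integrable μ (hmeas i) (hrad i).1 (hrad i).2).mul_const _)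
  have hindep' : ∀ a : Fin n → ℝ,
      iIndepFun (fun i ω => ε i ω * a i) μ :=
    fun a => hindep.comp (fun i x => x * a i) (fun i => measurable_mul_const (a i))
  have hexpint : ∀ (t : ℝ) (a : Fin n → ℝ), Integrable (fun ω => exp (t * S a ω)) μ := by
    intro t a
    have h := (hindep' a).integrable_exp_mul_sum (fun i => (hmeas i).mul_const _)
      (s := Finset.univ) (t := t) (fun i _ => by
        have h' := rad_integrable_exp μ (hmeas i) (hrad i).1 (hrad i).2 (t * a i)
        have he : (fun ω => exp (t * (ε i ω * a i))) = fun ω => exp ((t * a i) * ε i ω) := by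
          funext ω; ring_nf
        rw [he]; exact h')
    have he : (fun ω => exp (t * (∑ i, fun ω => ε i ω * a i) ω)) =
        fun ω => exp (t * S a ω) := by
      funext ω; simp [hS]
    rwa [he] at h
  have hmgf : ∀ (t : ℝ), ∀ a ∈ A, mgf (S a) μ t ≤ exp (t ^ 2 * D ^ 2 / 2) := by
    intro t a ha
    have hsum : S a = ∑ i, (fun ω => ε i ω * a i) := by
      funext ω; simp [hS]
    rw [hsum, (hindep' a).mgf_sum (fun i => (hmeas i).mul_const _)]
    have hstep : ∀ i : Fin n, mgf (fun ω => ε i ω * a i) μ t ≤ exp (t ^ 2 * (a i) ^ 2 / 2) := by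
      intro i
      have he : (fun ω => exp (t * (ε i ω * a i))) =
          fun ω => (fun x => exp ((t * a i) * x)) (ε i ω) := by
        funext ω; ring_nf
      have hI := rad_integral μ (hmeas i) (hrad i).1 (hrad i).2 (fun x => exp ((t * a i) * x))
      have : mgf (fun ω => ε i ω * a i) μ t = Real.cosh (t * a i) := by
        rw [mgf, he]
        refine hI.trans ?_
        rw [Real.cosh_eq]
        norm_num
      rw [this]
      calc Real.cosh (t * a i) ≤ exp ((t * a i) ^ 2 / 2) := Real.cosh_le_exp_half_sq _
        _ = exp (t ^ 2 * (a i) ^ 2 / 2) := by rw [mul_pow]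
    have hsum2 : ∑ i : Fin n, (a i) ^ 2 ≤ D ^ 2 := by
      have h1 := hD a ha
      have h2 : 0 ≤ ∑ i, (a i) ^ 2 := Finset.sum_nonneg fun i _ => sq_nonneg _
      nlinarith [Real.sq_sqrt h2, Real.sqrt_nonneg (∑ i, (a i) ^ 2)]
    calc ∏ i, mgf (fun ω => ε i ω * a i) μ t
        ≤ ∏ i, exp (t ^ 2 * (a i) ^ 2 / 2) :=
          Finset.prod_le_prod (fun i _ => mgf_nonneg) (fun i _ => hstep i)
      _ = exp (∑ i, t ^ 2 * (a i) ^ 2 / 2) := (Real.exp_sum _ _).symm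
      _ ≤ exp (t ^ 2 * D ^ 2 / 2) := by
          apply Real.exp_le_exp.2
          rw [← Finset.sum_div, ← Finset.mul_sum]
          have := mul_le_mul_of_nonneg_left hsum2 (sq_nonneg t)
          linarith
  have hMmeas : Measurable M := by
    have h := Finset.measurable_sup' ⟨a₀, ha₀⟩ (fun a _ => hSmeas a)
    have heq2 : M = A.sup' ⟨a₀, ha₀⟩ S := by
      funext ω; exact (Finset.sup'_apply ⟨a₀, ha₀⟩ S ω).symm
    rwa [heq2]
  have hMint : Integrable M μ := by
    refine Integrable.mono' (integrable_finset_sum A (fun a _ => (hSint a).abs))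
      hMmeas.aestronglyMeasurable (Filter.Eventually.of_forall fun ω => ?_)
    obtain ⟨b, hb, hbe⟩ := Finset.exists_mem_eq_sup' ⟨a₀, ha₀⟩ (fun a => S a ω)
    rw [Real.norm_eq_abs]
    calc |M ω| = |S b ω| := congrArg abs hbe
      _ ≤ ∑ a ∈ A, |S a ω| :=
          Finset.single_le_sum (f := fun a => |S a ω|) (fun a _ => abs_nonneg _) hb
  have hCpos : (0 : ℝ) < C := by
    rw [hC]; exact_mod_cast Finset.card_pos.2 ⟨a₀, ha₀⟩
  have hkey : ∀ t : ℝ, 0 < t → ∫ ω, M ω ∂μ ≤ Real.log C / t + t * D ^ 2 / 2 := by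
    intro t ht
    have hgint : Integrable (fun ω => exp (t * M ω)) μ := by
      refine Integrable.mono' (integrable_finset_sum A (fun a _ => hexpint t a))
        ((hMmeas.const_mul t).exp).aestronglyMeasurable
        (Filter.Eventually.of_forall fun ω => ?_)
      obtain ⟨b, hb, hbe⟩ := Finset.exists_mem_eq_sup' ⟨a₀, ha₀⟩ (fun a => S a ω)
      rw [Real.norm_eq_abs, Real.abs_exp]
      calc exp (t * M ω) = exp (t * S b ω) := by rw [show M ω = S b ω from hbe]
        _ ≤ ∑ a ∈ A, exp (t * S a ω) :=
            Finset.single_le_sum (f := fun a => exp (t * S a ω))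
              (fun a _ => (Real.exp_pos _).le) hb
    have hJ : exp (t * ∫ ω, M ω ∂μ) ≤ ∫ ω, exp (t * M ω) ∂μ := by
      have h := convexOn_exp.map_integral_le (f := fun ω => t * M ω)
        Real.continuous_exp.continuousOn isClosed_univ
        (Filter.Eventually.of_forall fun _ => Set.mem_univ _)
        (hMint.const_mul t) (by exact hgint)
      rwa [integral_const_mul] at h
    have hsumle : ∫ ω, exp (t * M ω) ∂μ ≤ C * exp (t ^ 2 * D ^ 2 / 2) := by
      calc ∫ ω, exp (t * M ω) ∂μ
          ≤ ∫ ω, ∑ a ∈ A, exp (t * S a ω) ∂μ := by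
            refine integral_mono hgint (integrable_finset_sum A (fun a _ => hexpint t a)) ?_
            intro ω
            obtain ⟨b, hb, hbe⟩ := Finset.exists_mem_eq_sup' ⟨a₀, ha₀⟩ (fun a => S a ω)
            calc exp (t * M ω) = exp (t * S b ω) := by rw [show M ω = S b ω from hbe]
              _ ≤ ∑ a ∈ A, exp (t * S a ω) :=
                  Finset.single_le_sum (f := fun a => exp (t * S a ω))
                    (fun a _ => (Real.exp_pos _).le) hb
        _ = ∑ a ∈ A, mgf (S a) μ t := by
            rw [integral_finset_sum A (fun a _ => hexpint t a)]; rfl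
        _ ≤ ∑ _a ∈ A, exp (t ^ 2 * D ^ 2 / 2) := Finset.sum_le_sum (hmgf t)
        _ = C * exp (t ^ 2 * D ^ 2 / 2) := by
            rw [Finset.sum_const, nsmul_eq_mul, hC]
    have hlog : t * ∫ ω, M ω ∂μ ≤ Real.log C + t ^ 2 * D ^ 2 / 2 := by
      have h := hJ.trans hsumle
      have h2 : t * ∫ ω, M ω ∂μ ≤ Real.log (C * exp (t ^ 2 * D ^ 2 / 2)) :=
        (Real.le_log_iff_exp_le (by positivity)).2 h
      rwa [Real.log_mul (ne_of_gt hCpos) (ne_of_gt (Real.exp_pos _)), Real.log_exp] at h2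
    rw [div_add_div _ _ (ne_of_gt ht) two_ne_zero, le_div_iff₀ (by positivity)]
    calc (∫ ω, M ω ∂μ) * (t * 2) = (t * ∫ ω, M ω ∂μ) * 2 := by ring
      _ ≤ (Real.log C + t ^ 2 * D ^ 2 / 2) * 2 := by linarith
      _ = Real.log C * 2 + t * (t * D ^ 2) := by ring
  by_cases hcard : A.card = 1
  · -- singleton case: the expectation is zero
    have hzero : ∫ ω, M ω ∂μ = 0 := by
      obtain ⟨a, rfl⟩ := Finset.card_eq_one.mp hcard
      have : M = S a := by
        funext ω; simp only [hM]; rw [Finset.sup'_singleton]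
      rw [this, hS]
      rw [integral_finset_sum _ (fun i _ =>
        (rad_integrable μ (hmeas i) (hrad i).1 (hrad i).2).mul_const _)]
      refine Finset.sum_eq_zero fun i _ => ?_
      rw [integral_mul_const]
      have := rad_integral μ (hmeas i) (hrad i).1 (hrad i).2 id
      simp only [id] at this
      rw [this]; norm_num
    rw [show (∫ ω, A.sup' ⟨a₀, ha₀⟩ (fun a => ∑ i, ε i ω * a i) ∂μ) = ∫ ω, M ω ∂μ from rfl,
      hzero]
    have : Real.log (A.card : ℝ) = 0 := by rw [hcard]; norm_num
    rw [this]
    simp [hD0]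
  · have hC2 : 2 ≤ A.card := by
      have := Finset.card_pos.2 ⟨a₀, ha₀⟩; omega
    have hlogpos : 0 < Real.log C := by
      apply Real.log_pos
      rw [hC]; exact_mod_cast hC2
    have hDpos : 0 < D := by
      rcases hD0.eq_or_lt with h | h
      · exfalso
        have hzero : ∀ a ∈ A, a = (0 : Fin n → ℝ) := by
          intro a ha
          have h1 := hD a ha
          rw [← h] at h1
          have h2 : 0 ≤ ∑ i, (a i) ^ 2 := Finset.sum_nonneg fun i _ => sq_nonneg _
          have h3 : ∑ i, (a i) ^ 2 = 0 := by
            have := Real.sqrt_nonneg (∑ i, (a i) ^ 2)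
            have h4 : Real.sqrt (∑ i, (a i) ^ 2) = 0 := le_antisymm h1 this
            rwa [Real.sqrt_eq_zero h2] at h4
          funext i
          have := (Finset.sum_eq_zero_iff_of_nonneg (fun i _ => sq_nonneg (a i))).1 h3
            i (Finset.mem_univ i)
          exact pow_eq_zero_iff two_ne_zero |>.1 this
        obtain ⟨x, hx, y, hy, hxy⟩ := Finset.one_lt_card.1 (by omega : 1 < A.card)
        exact hxy ((hzero x hx).trans (hzero y hy).symm)
      · exact h
    set s : ℝ := Real.sqrt (2 * Real.log C) with hs
    have hsq : s ^ 2 = 2 * Real.log C := Real.sq_sqrt (by linarith)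
    have hspos : 0 < s := Real.sqrt_pos.2 (by linarith)
    set t : ℝ := s / D with ht
    have htpos : 0 < t := div_pos hspos hDpos
    have hbound := hkey t htpos
    have hlogC : Real.log C = s ^ 2 / 2 := by rw [hsq]; ring
    have heq : Real.log C / t + t * D ^ 2 / 2 = D * s := by
      rw [hlogC, ht]
      field_simp
      ring
    calc ∫ ω, A.sup' ⟨a₀, ha₀⟩ (fun a => ∑ i, ε i ω * a i) ∂μ
        = ∫ ω, M ω ∂μ := rfl
      _ ≤ Real.log C / t + t * D ^ 2 / 2 := hbound
      _ = D * s := heq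
      _ = D * Real.sqrt (2 * Real.log C) := by rw [hs]
end

section
/- Bretagnolle–Huber inequality: for any two probability measures P, Q on the same measurable space and any event E, P(E) + Q(Eᶜ) ≥ (1/2) exp(−KL(P||Q)). -/
open MeasureTheory Real
open scoped ENNReal Classical

/-- The Kullback–Leibler divergence `KL(P‖Q) = ∫ log (dP/dQ) dP`, taken to be `+∞`
if `P` is not absolutely continuous w.r.t. `Q` (or the log-likelihood ratio is not
integrable). -/
noncomputable def klDiv {Ω : Type*} [MeasurableSpace Ω] (P Q : Measure Ω) : ℝ≥0∞ :=
  if P ≪ Q ∧ Integrable (llr P Q) P then ENNReal.ofReal (∫ x, llr P Q x ∂P) else ⊤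

/-- Bretagnolle–Huber inequality: for probability measures `P, Q` and any event `E`,
`P(E) + Q(Eᶜ) ≥ ½ exp(−KL(P‖Q))` (where `exp(−∞) = 0`). -/
theorem bretagnolle_huber {Ω : Type*} [MeasurableSpace Ω]
    (P Q : Measure Ω) [IsProbabilityMeasure P] [IsProbabilityMeasure Q]
    (E : Set Ω) (hE : MeasurableSet E) :
    (if klDiv P Q = ⊤ then 0
      else ENNReal.ofReal ((1 / 2) * Real.exp (-(klDiv P Q).toReal))) ≤
      P E + Q Eᶜ := by
  by_cases hKL : klDiv P Q = ⊤
  · simp [hKL]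
  rw [if_neg hKL]
  have hcond : P ≪ Q ∧ Integrable (llr P Q) P := by
    by_contra h
    exact hKL (if_neg h)
  obtain ⟨hPQ, hint⟩ := hcond
  set f := P.rnDeriv Q with hf
  have hfm : Measurable f := Measure.measurable_rnDeriv P Q
  set r := ∫ x, llr P Q x ∂P with hr
  have hKLval : klDiv P Q = ENNReal.ofReal r := if_pos ⟨hPQ, hint⟩
  -- it suffices to prove the bound with `exp (-r)` in place of `exp (-(klDiv P Q).toReal)`
  suffices h : ENNReal.ofReal ((1 / 2) * Real.exp (-r)) ≤ P E + Q Eᶜ by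
    refine le_trans (ENNReal.ofReal_le_ofReal ?_) h
    have hrle : r ≤ (klDiv P Q).toReal := by
      rw [hKLval]
      rcases le_or_gt 0 r with h0 | h0
      · rw [ENNReal.toReal_ofReal h0]
      · rw [ENNReal.ofReal_of_nonpos h0.le]
        simpa using h0.le
    have := Real.exp_le_exp.2 (neg_le_neg hrle)
    nlinarith [Real.exp_pos (-(klDiv P Q).toReal)]
  set M := ∫⁻ x, min (f x) 1 ∂Q with hM
  set T := ∫⁻ x, max (f x) 1 ∂Q with hT
  set S := ∫⁻ x, f x ^ (1/2 : ℝ) ∂Q with hS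
  have hMm : Measurable fun x => min (f x) 1 := hfm.min measurable_const
  -- Step A : M ≤ P E + Q Eᶜ
  have hA : M ≤ P E + Q Eᶜ := by
    have h1 : ∫⁻ x in E, min (f x) 1 ∂Q ≤ P E := by
      rw [← Measure.setLIntegral_rnDeriv hPQ E]
      exact lintegral_mono fun x => min_le_left _ _
    have h2 : ∫⁻ x in Eᶜ, min (f x) 1 ∂Q ≤ Q Eᶜ := by
      calc ∫⁻ x in Eᶜ, min (f x) 1 ∂Q ≤ ∫⁻ _ in Eᶜ, 1 ∂Q :=
            lintegral_mono fun x => min_le_right _ _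
        _ = Q Eᶜ := by simp
    calc M = ∫⁻ x in E, min (f x) 1 ∂Q + ∫⁻ x in Eᶜ, min (f x) 1 ∂Q :=
          (lintegral_add_compl _ hE).symm
      _ ≤ P E + Q Eᶜ := add_le_add h1 h2
  -- T ≤ 2
  have hT2 : T ≤ 2 := by
    have h1 : T ≤ ∫⁻ x, f x + 1 ∂Q :=
      lintegral_mono fun x => max_le (le_add_right le_rfl) (le_add_left le_rfl)
    rw [lintegral_add_right _ measurable_const] at h1
    simp only [lintegral_one, measure_univ, mul_one] at h1
    refine h1.trans ?_
    have hle : ∫⁻ x, f x ∂Q ≤ P Set.univ := Measure.lintegral_rnDeriv_le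
    rw [measure_univ] at hle
    calc (∫⁻ x, f x ∂Q) + 1 ≤ 1 + 1 := add_le_add_left hle 1
      _ = 2 := one_add_one_eq_two
  -- Step B (Cauchy-Schwarz) : S ≤ M ^ (1/2) * T ^ (1/2), hence 2⁻¹ * S ^ 2 ≤ M
  have hB : S ≤ M ^ (1/2 : ℝ) * T ^ (1/2 : ℝ) := by
    have hpq : Real.HolderConjugate 2 2 := Real.HolderConjugate.two_two
    have hmin : AEMeasurable (fun x => (min (f x) 1) ^ (1/2 : ℝ)) Q :=
      (hMm.pow_const _).aemeasurable
    have hmax : AEMeasurable (fun x => (max (f x) 1) ^ (1/2 : ℝ)) Q :=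
      ((hfm.max measurable_const).pow_const _).aemeasurable
    have hCS := ENNReal.lintegral_mul_le_Lp_mul_Lq Q hpq hmin hmax
    have heq : ∀ x, f x ^ (1/2 : ℝ)
        = (min (f x) 1) ^ (1/2 : ℝ) * (max (f x) 1) ^ (1/2 : ℝ) := by
      intro x
      rw [← ENNReal.mul_rpow_of_nonneg _ _ (by norm_num : (0:ℝ) ≤ 1/2), min_mul_max, mul_one]
    have hpow : ∀ a : ℝ≥0∞, (a ^ (1/2 : ℝ)) ^ (2 : ℝ) = a := by
      intro a
      rw [← ENNReal.rpow_mul]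
      norm_num
    have h12 : (1 : ℝ) / 2 = 1 / (2:ℝ) := rfl
    calc S = ∫⁻ x, ((fun x => (min (f x) 1) ^ (1/2:ℝ)) * fun x => (max (f x) 1) ^ (1/2:ℝ)) x ∂Q := by
          simp only [Pi.mul_apply]; exact lintegral_congr heq
      _ ≤ (∫⁻ x, ((min (f x) 1) ^ (1/2:ℝ)) ^ (2:ℝ) ∂Q) ^ (1/2 : ℝ)
          * (∫⁻ x, ((max (f x) 1) ^ (1/2:ℝ)) ^ (2:ℝ) ∂Q) ^ (1/2 : ℝ) := hCS
      _ = M ^ (1/2 : ℝ) * T ^ (1/2 : ℝ) := by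
          simp only [hpow]
          rfl
  have hB2 : 2⁻¹ * S ^ (2 : ℝ) ≤ M := by
    have hST : S ^ (2:ℝ) ≤ M * 2 := by
      calc S ^ (2:ℝ) ≤ (M ^ (1/2:ℝ) * T ^ (1/2:ℝ)) ^ (2:ℝ) :=
            ENNReal.rpow_le_rpow hB (by norm_num)
        _ = M * T := by
            rw [ENNReal.mul_rpow_of_nonneg _ _ (by norm_num : (0:ℝ) ≤ 2),
              ← ENNReal.rpow_mul, ← ENNReal.rpow_mul]
            norm_num
        _ ≤ M * 2 := mul_le_mul_right hT2 M
    calc 2⁻¹ * S ^ (2:ℝ) ≤ 2⁻¹ * (M * 2) := mul_le_mul_right hST _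
      _ = M := by
          rw [mul_comm M 2, ← mul_assoc,
            ENNReal.inv_mul_cancel (by norm_num) (by norm_num), one_mul]
  -- Step C : change of measure, S = ofReal (∫ exp (-(llr)/2) dP)
  set g : Ω → ℝ := fun x => Real.exp (-(llr P Q x) / 2) with hg
  have hgm : Measurable g := ((measurable_llr P Q).neg.div_const 2).exp
  have hae : ∀ᵐ x ∂P, ENNReal.ofReal (g x) = f x ^ (-(1/2) : ℝ) := by
    filter_upwards [Measure.rnDeriv_pos hPQ, hPQ.ae_le (Measure.rnDeriv_lt_top P Q)]
      with x hpos hlt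
    have ht : 0 < (f x).toReal := ENNReal.toReal_pos hpos.ne' hlt.ne
    have hgx : g x = (f x).toReal ^ (-(1/2) : ℝ) := by
      rw [Real.rpow_def_of_pos ht]
      simp only [hg, llr]
      ring_nf
      rfl
    rw [hgx, ← ENNReal.ofReal_rpow_of_pos ht, ENNReal.ofReal_toReal hlt.ne]
  have hL : ∫⁻ x, ENNReal.ofReal (g x) ∂P = S := by
    calc ∫⁻ x, ENNReal.ofReal (g x) ∂P = ∫⁻ x, f x ^ (-(1/2):ℝ) ∂P := lintegral_congr_ae hae
      _ = ∫⁻ x, f x * f x ^ (-(1/2):ℝ) ∂Q :=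
          (MeasureTheory.lintegral_rnDeriv_mul hPQ ((hfm.pow_const _).aemeasurable)).symm
      _ = S := by
          refine lintegral_congr_ae ?_
          filter_upwards [Measure.rnDeriv_lt_top P Q] with x hlt
          rcases eq_or_ne (f x) 0 with h0 | h0
          · rw [h0, zero_mul, ENNReal.zero_rpow_of_pos (by norm_num)]
          · have h1 : f x ^ (1/2:ℝ) = f x ^ ((1:ℝ) + -(1/2)) := by norm_num
            rw [h1, ENNReal.rpow_add _ _ h0 hlt.ne, ENNReal.rpow_one]
  -- S ≤ T ≤ 2, hence finite
  have hS2 : S ≤ 2 := by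
    refine le_trans (lintegral_mono fun x => ?_) hT2
    rcases le_total (f x) 1 with h | h
    · exact le_max_of_le_right (ENNReal.rpow_le_one h (by norm_num))
    · refine le_max_of_le_left ?_
      calc f x ^ (1/2:ℝ) ≤ f x ^ (1:ℝ) :=
            ENNReal.rpow_le_rpow_of_exponent_le h (by norm_num)
        _ = f x := ENNReal.rpow_one _
  have hgi : Integrable g P := by
    refine ⟨hgm.aestronglyMeasurable, ?_⟩
    rw [hasFiniteIntegral_iff_ofReal (Filter.Eventually.of_forall fun x => (Real.exp_pos _).le),
      hL]
    exact lt_of_le_of_lt hS2 (by norm_num)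
  -- Jensen
  have hjen : Real.exp (-r / 2) ≤ ∫ x, g x ∂P := by
    have hφi : Integrable (fun x => -(llr P Q x) / 2) P := hint.neg.div_const 2
    have hgi' : Integrable (Real.exp ∘ fun x => -(llr P Q x) / 2) P := hgi
    have h := convexOn_exp.map_integral_le continuous_exp.continuousOn isClosed_univ
      (Filter.Eventually.of_forall fun x => Set.mem_univ _) hφi hgi'
    have hint2 : ∫ x, -(llr P Q x) / 2 ∂P = -r / 2 := by
      rw [integral_div, integral_neg]
    rwa [hint2] at h
  have hofI : ENNReal.ofReal (∫ x, g x ∂P) = S := by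
    rw [MeasureTheory.ofReal_integral_eq_lintegral_ofReal hgi
      (Filter.Eventually.of_forall fun x => (Real.exp_pos _).le), hL]
  have hCfin : ENNReal.ofReal (Real.exp (-r / 2)) ≤ S := by
    rw [← hofI]; exact ENNReal.ofReal_le_ofReal hjen
  -- Final assembly
  calc ENNReal.ofReal ((1/2) * Real.exp (-r))
      = 2⁻¹ * ENNReal.ofReal (Real.exp (-r / 2)) ^ (2:ℝ) := by
        rw [ENNReal.ofReal_mul (by norm_num : (0:ℝ) ≤ 1/2)]
        congr 1
        · rw [show (1/2 : ℝ) = (2:ℝ)⁻¹ by norm_num, ENNReal.ofReal_inv_of_pos two_pos,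
            ENNReal.ofReal_ofNat]
        · rw [ENNReal.ofReal_rpow_of_pos (Real.exp_pos _), ← Real.exp_mul]
          norm_num
    _ ≤ 2⁻¹ * S ^ (2:ℝ) :=
        mul_le_mul_right (ENNReal.rpow_le_rpow hCfin (by norm_num)) _
    _ ≤ M := hB2
    _ ≤ P E + Q Eᶜ := hA
end

section
/- If a policy π is uniformly good (its expected regret is o(T^a) for every a > 0 and every parameter) and for a suboptimal cluster C there exists an alternative parameter θ' with max_{j∈C} KL_j(θ*||θ') ≤ φ + ε and μ_i(θ') > μ*, then liminf_{T→∞} E[N_C(T)]/log T ≥ 1/(φ + ε). Abstractly: if R(T) + R'(T) ≥ (T c / 4)·exp(−(φ+ε)·E N_C(T)) with c > 0 and R(T), R'(T) = o(T^a) for all a > 0, then liminf E N_C(T)/log T ≥ 1/(φ+ε). -/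
open Filter Real
open scoped ENNReal Topology

/-- Abstract form of the regret lower bound argument: if
`R(T) + R'(T) ≥ (c T / 4) exp(−λ N(T))` with `c, λ > 0`, the functions `N, R, R'` are
nonnegative, and `R(T)/T^a → 0`, `R'(T)/T^a → 0` for every `a > 0` (uniform goodness),
then `liminf_{T → ∞} N(T) / log T ≥ 1/λ`. -/
theorem uniformly_good_liminf_lower_bound
    (N R R' : ℕ → ℝ) (c lam : ℝ) (hc : 0 < c) (hlam : 0 < lam)
    (hN : ∀ T, 0 ≤ N T) (hR : ∀ T, 0 ≤ R T) (hR' : ∀ T, 0 ≤ R' T)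
    (hineq : ∀ T : ℕ, (c * T / 4) * Real.exp (-lam * N T) ≤ R T + R' T)
    (hgood : ∀ a : ℝ, 0 < a →
      Tendsto (fun T : ℕ => R T / (T : ℝ) ^ a) atTop (𝓝 0) ∧
      Tendsto (fun T : ℕ => R' T / (T : ℝ) ^ a) atTop (𝓝 0)) :
    ENNReal.ofReal (1 / lam) ≤
      Filter.liminf (fun T : ℕ => ENNReal.ofReal (N T / Real.log T)) atTop := by
  -- Step 1: for every a ∈ (0,1), liminf ≥ ofReal ((1-a)/lam)
  have key : ∀ a : ℝ, 0 < a → a < 1 →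
      ENNReal.ofReal ((1 - a) / lam) ≤
        Filter.liminf (fun T : ℕ => ENNReal.ofReal (N T / Real.log T)) atTop := by
    intro a ha ha1
    obtain ⟨hRt, hR't⟩ := hgood a ha
    have hc8 : (0:ℝ) < c / 8 := by linarith
    have h2 := Filter.Tendsto.eventually_lt_const hc8 hR't
    have h3 : ∀ᶠ T : ℕ in atTop, 2 ≤ T := eventually_ge_atTop 2
    have hev : ∀ᶠ T : ℕ in atTop,
        ENNReal.ofReal ((1 - a) / lam) ≤ ENNReal.ofReal (N T / Real.log T) := by
      filter_upwards [Filter.Tendsto.eventually_lt_const hc8 hRt, h2, h3] with T hTR hTR' hT2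
      have hTpos : (0:ℝ) < (T : ℝ) := by positivity
      have hTa : (0:ℝ) < (T : ℝ) ^ a := Real.rpow_pos_of_pos hTpos a
      have hRb : R T ≤ (c/8) * (T : ℝ) ^ a := by
        have := (div_lt_iff₀ hTa).mp hTR; linarith
      have hR'b : R' T ≤ (c/8) * (T : ℝ) ^ a := by
        have := (div_lt_iff₀ hTa).mp hTR'; linarith
      have hsum : (c * T / 4) * Real.exp (-lam * N T) ≤ (c/4) * (T : ℝ) ^ a := by
        calc (c * T / 4) * Real.exp (-lam * N T) ≤ R T + R' T := hineq T
          _ ≤ (c/4) * (T : ℝ) ^ a := by linarith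
      have hexp : Real.exp (-lam * N T) ≤ (T : ℝ) ^ (a - 1) := by
        have hTc4 : (0:ℝ) < c * T / 4 := by positivity
        have : Real.exp (-lam * N T) ≤ (c/4) * (T : ℝ) ^ a / (c * T / 4) := by
          rw [le_div_iff₀ hTc4]; linarith [hsum]
        calc Real.exp (-lam * N T) ≤ (c/4) * (T : ℝ) ^ a / (c * T / 4) := this
          _ = (T : ℝ) ^ a / (T : ℝ) := by field_simp
          _ = (T : ℝ) ^ (a - 1) := by
              rw [Real.rpow_sub hTpos, Real.rpow_one]
      have hlog : -lam * N T ≤ (a - 1) * Real.log T := by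
        have := Real.log_le_log (Real.exp_pos _) hexp
        rwa [Real.log_exp, Real.log_rpow hTpos] at this
      have hlogT : (0:ℝ) < Real.log T := by
        apply Real.log_pos
        exact_mod_cast Nat.lt_of_lt_of_le (by norm_num) hT2
      have hNlb : (1 - a) / lam ≤ N T / Real.log T := by
        rw [div_le_div_iff₀ hlam hlogT]
        nlinarith [hlog, hlogT]
      exact ENNReal.ofReal_le_ofReal hNlb
    exact le_liminf_of_le (by isBoundedDefault) hev
  -- Step 2: take a → 0 along a = 1/(n+2)
  set L := Filter.liminf (fun T : ℕ => ENNReal.ofReal (N T / Real.log T)) atTop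
  have htend : Tendsto (fun n : ℕ => ENNReal.ofReal ((1 - 1/(n+2 : ℝ)) / lam)) atTop
      (𝓝 (ENNReal.ofReal (1 / lam))) := by
    apply (ENNReal.continuous_ofReal.tendsto _).comp
    have : Tendsto (fun n : ℕ => (1/(n+2 : ℝ))) atTop (𝓝 0) := by
      simp only [one_div]
      exact Tendsto.comp tendsto_inv_atTop_zero
        (tendsto_atTop_add_const_right atTop 2 tendsto_natCast_atTop_atTop)
    have h2 : Tendsto (fun n : ℕ => (1 - 1/(n+2 : ℝ)) / lam) atTop (𝓝 ((1 - 0) / lam)) :=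
      ((tendsto_const_nhds.sub this)).div_const lam
    simpa using h2
  refine le_of_tendsto htend (Eventually.of_forall fun n => ?_)
  apply key
  · positivity
  · rw [div_lt_one (by positivity)]; linarith [Nat.cast_nonneg (α := ℝ) n]
end
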